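/- Consider the multilayer NODE system in which, for each layer i+1, the scalar activation φ^{i+1} is incrementally sector bounded by [α^{i+1}, β^{i+1}] on ℝ. Suppose there exist a symmetric positive definite P ∈ ℝ^{n×n} and constants 0 < p̲ ≤ p̄ and μ > 0 with p̲·I ⪯ P ⪯ p̄·I such that for all vectors u ∈ ℝⁿ, v⁰ ∈ ℝⁿ and vⁱ ∈ ℝ^{mᵢ}, i = 1,…,k: −μ·‖u‖² + 2·⟨u, P·v⁰⟩ + ⟨v⁰, (AᵀP + PA)·v⁰⟩ + 2·⟨v⁰, P·W^{k+1}·vᵏ⟩ − 2·Σ_{i=0}^{k−1} ⟨v^{i+1} − α^{i+1}·W^{i+1}·vⁱ, v^{i+1} − β^{i+1}·W^{i+1}·vⁱ⟩ ≤ 0. Then any two solutions x₁, x₂ of the multilayer NODE system satisfy ‖x₁(t) − x₂(t)‖ ≤ √(p̄/p̲) · e^{−(p̲/(2μ))·t} · ‖x₁(0) − x₂(0)‖ for all t ≥ 0. -/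

import Mathlib

open Matrix

/-- The Euclidean norm of a vector in `ℝⁿ`. -/
noncomputable def eNorm {n : ℕ} (v : Fin n → ℝ) : ℝ := Real.sqrt (v ⬝ᵥ v)

/-- Layer maps of a feedforward neural network whose layer `i+1` applies the scalar
activation `φ i` componentwise. -/
noncomputable def nnLayer (m : ℕ → ℕ)
    (W : (i : ℕ) → Matrix (Fin (m (i + 1))) (Fin (m i)) ℝ)
    (b : (i : ℕ) → Fin (m (i + 1)) → ℝ)
    (φ : ℕ → ℝ → ℝ) :
    (i : ℕ) → (Fin (m 0) → ℝ) → Fin (m i) → ℝ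
  | 0, x => x
  | i + 1, x => fun j => φ i ((W i).mulVec (nnLayer m W b φ i x) j + b i j)

lemma hasDerivAt_dotQuad {n : ℕ} (P : Matrix (Fin n) (Fin n) ℝ)
    (f : ℝ → Fin n → ℝ) (f' : Fin n → ℝ) (t : ℝ)
    (hf : HasDerivAt f f' t) :
    HasDerivAt (fun s => f s ⬝ᵥ P.mulVec (f s))
      (f' ⬝ᵥ P.mulVec (f t) + f t ⬝ᵥ P.mulVec f') t := by
  have hcomp : ∀ i, HasDerivAt (fun s => f s i) (f' i) t := fun i => hasDerivAt_pi.mp hf i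
  have h : HasDerivAt (fun s => ∑ j, f s j * ∑ i, P j i * f s i)
      (∑ j, (f' j * ∑ i, P j i * f t i + f t j * ∑ i, P j i * f' i)) t := by
    apply HasDerivAt.fun_sum
    intro j _
    exact (hcomp j).mul (HasDerivAt.fun_sum (fun i _ => (hcomp i).const_mul (P j i)))
  simpa [dotProduct, mulVec, Finset.sum_add_distrib] using h

lemma dot_mulVec_left {n : ℕ} (A : Matrix (Fin n) (Fin n) ℝ) (x w : Fin n → ℝ) :
    (A.mulVec x) ⬝ᵥ w = x ⬝ᵥ Aᵀ.mulVec w := by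
  rw [dotProduct_comm, dotProduct_mulVec, ← mulVec_transpose, dotProduct_comm]

lemma dot_symm {n : ℕ} (P : Matrix (Fin n) (Fin n) ℝ) (hP : Pᵀ = P) (x y : Fin n → ℝ) :
    x ⬝ᵥ P.mulVec y = y ⬝ᵥ P.mulVec x := by
  conv_lhs => rw [dotProduct_mulVec, ← hP, vecMul_transpose, dotProduct_comm]

lemma quad_eq {n : ℕ} (A P : Matrix (Fin n) (Fin n) ℝ) (x : Fin n → ℝ) :
    (A.mulVec x) ⬝ᵥ P.mulVec x + x ⬝ᵥ P.mulVec (A.mulVec x)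
      = x ⬝ᵥ (Aᵀ * P + P * A).mulVec x := by
  rw [dot_mulVec_left, Matrix.mulVec_mulVec, Matrix.mulVec_mulVec, ← dotProduct_add,
    ← Matrix.add_mulVec]

/-- Theorem 4: contraction of the multilayer NODE system under the
convex (quadratic-form) LMI condition. -/
theorem multilayer_node_contractive_LMI
    (k : ℕ) (hk : 1 ≤ k) (m : ℕ → ℕ)
    (A : Matrix (Fin (m 0)) (Fin (m 0)) ℝ)
    (W : (i : ℕ) → Matrix (Fin (m (i + 1))) (Fin (m i)) ℝ)
    (b : (i : ℕ) → Fin (m (i + 1)) → ℝ)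
    (Wk : Matrix (Fin (m 0)) (Fin (m k)) ℝ) (bk : Fin (m 0) → ℝ)
    (φ : ℕ → ℝ → ℝ) (α β : ℕ → ℝ)
    (hsec : ∀ i, ∀ a c : ℝ,
      (φ i a - φ i c - α i * (a - c)) * (φ i a - φ i c - β i * (a - c)) ≤ 0)
    (P : Matrix (Fin (m 0)) (Fin (m 0)) ℝ) (hP : P.PosDef)
    (p₁ p₂ μ : ℝ) (hp₁ : 0 < p₁) (hp₁₂ : p₁ ≤ p₂) (hμ : 0 < μ)
    (hPlo : (P - p₁ • (1 : Matrix (Fin (m 0)) (Fin (m 0)) ℝ)).PosSemidef)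
    (hPhi : (p₂ • (1 : Matrix (Fin (m 0)) (Fin (m 0)) ℝ) - P).PosSemidef)
    (hQF : ∀ (u : Fin (m 0) → ℝ) (v : (i : ℕ) → Fin (m i) → ℝ),
      -μ * (u ⬝ᵥ u) + 2 * (u ⬝ᵥ P.mulVec (v 0))
        + v 0 ⬝ᵥ (Aᵀ * P + P * A).mulVec (v 0)
        + 2 * (v 0 ⬝ᵥ P.mulVec (Wk.mulVec (v k)))
        - 2 * ∑ i ∈ Finset.range k,
            (v (i + 1) - α i • (W i).mulVec (v i)) ⬝ᵥ
              (v (i + 1) - β i • (W i).mulVec (v i)) ≤ 0)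
    (x₁ x₂ : ℝ → Fin (m 0) → ℝ)
    (hx₁ : ∀ t, 0 ≤ t → HasDerivAt x₁
      (A.mulVec (x₁ t) + (Wk.mulVec (nnLayer m W b φ k (x₁ t)) + bk)) t)
    (hx₂ : ∀ t, 0 ≤ t → HasDerivAt x₂
      (A.mulVec (x₂ t) + (Wk.mulVec (nnLayer m W b φ k (x₂ t)) + bk)) t) :
    ∀ t, 0 ≤ t →
      eNorm (x₁ t - x₂ t) ≤
        Real.sqrt (p₂ / p₁) * Real.exp (-(p₁ / (2 * μ)) * t) * eNorm (x₁ 0 - x₂ 0) := by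
  classical
  have hPsymm : Pᵀ = P := by
    have h := hP.1
    simpa [Matrix.IsHermitian, Matrix.conjTranspose_eq_transpose_of_trivial] using h
  set e : ℝ → Fin (m 0) → ℝ := fun s => x₁ s - x₂ s with hedef
  set v : ℝ → (i : ℕ) → Fin (m i) → ℝ :=
    fun s i => nnLayer m W b φ i (x₁ s) - nnLayer m W b φ i (x₂ s) with hvdef
  set c : ℝ := p₁ / μ with hcdef
  have hc : 0 < c := div_pos hp₁ hμ
  have hmc : μ * c = p₁ := by
    rw [hcdef]; field_simp
  -- derivative of the difference
  have hde : ∀ s, 0 ≤ s →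
      HasDerivAt e (A.mulVec (e s) + Wk.mulVec (v s k)) s := by
    intro s hs
    have h := (hx₁ s hs).sub (hx₂ s hs)
    refine h.congr_deriv ?_
    simp only [hedef, hvdef, Matrix.mulVec_sub]
    funext j
    simp only [Pi.add_apply, Pi.sub_apply]
    ring
  set V : ℝ → ℝ := fun s => e s ⬝ᵥ P.mulVec (e s) with hVdef
  have hdV : ∀ s, 0 ≤ s → HasDerivAt V
      ((A.mulVec (e s) + Wk.mulVec (v s k)) ⬝ᵥ P.mulVec (e s)
        + e s ⬝ᵥ P.mulVec (A.mulVec (e s) + Wk.mulVec (v s k))) s :=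
    fun s hs => hasDerivAt_dotQuad P e _ s (hde s hs)
  -- bounds of V
  have hVlo : ∀ s, p₁ * (e s ⬝ᵥ e s) ≤ V s := by
    intro s
    have h := hPlo.dotProduct_mulVec_nonneg (e s)
    simpa [Matrix.sub_mulVec, Matrix.smul_mulVec, Matrix.one_mulVec, dotProduct_sub,
      dotProduct_smul, smul_eq_mul, sub_nonneg] using h
  have hVhi : ∀ s, V s ≤ p₂ * (e s ⬝ᵥ e s) := by
    intro s
    have h := hPhi.dotProduct_mulVec_nonneg (e s)
    simpa [Matrix.sub_mulVec, Matrix.smul_mulVec, Matrix.one_mulVec, dotProduct_sub,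
      dotProduct_smul, smul_eq_mul, sub_nonneg] using h
  -- sector bound on differences
  have hterm : ∀ s i, (v s (i + 1) - α i • (W i).mulVec (v s i)) ⬝ᵥ
      (v s (i + 1) - β i • (W i).mulVec (v s i)) ≤ 0 := by
    intro s i
    rw [dotProduct]
    apply Finset.sum_nonpos
    intro j _
    have h := hsec i ((W i).mulVec (nnLayer m W b φ i (x₁ s)) j + b i j)
                     ((W i).mulVec (nnLayer m W b φ i (x₂ s)) j + b i j)
    have h1 : (v s (i + 1)) j
        = φ i ((W i).mulVec (nnLayer m W b φ i (x₁ s)) j + b i j)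
          - φ i ((W i).mulVec (nnLayer m W b φ i (x₂ s)) j + b i j) := by
      simp [hvdef, nnLayer]
    have h2 : ((W i).mulVec (v s i)) j
        = (W i).mulVec (nnLayer m W b φ i (x₁ s)) j
          - (W i).mulVec (nnLayer m W b φ i (x₂ s)) j := by
      simp [hvdef, Matrix.mulVec_sub]
    simp only [Pi.sub_apply, Pi.smul_apply, smul_eq_mul, h1, h2]
    refine le_trans (le_of_eq ?_) h
    ring
  -- key differential inequality
  have key : ∀ s,
      (A.mulVec (e s) + Wk.mulVec (v s k)) ⬝ᵥ P.mulVec (e s)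
        + e s ⬝ᵥ P.mulVec (A.mulVec (e s) + Wk.mulVec (v s k)) ≤ -c * V s := by
    intro s
    have hq := hQF (c • e s) (v s)
    have hv0 : v s 0 = e s := rfl
    rw [hv0] at hq
    have hu1 : (c • e s) ⬝ᵥ (c • e s) = c ^ 2 * (e s ⬝ᵥ e s) := by
      rw [smul_dotProduct, dotProduct_smul, smul_eq_mul, smul_eq_mul]; ring
    have hu2 : (c • e s) ⬝ᵥ P.mulVec (e s) = c * V s := by
      rw [smul_dotProduct, smul_eq_mul]
    rw [hu1, hu2] at hq
    have hS : ∑ i ∈ Finset.range k,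
        (v s (i + 1) - α i • (W i).mulVec (v s i)) ⬝ᵥ
          (v s (i + 1) - β i • (W i).mulVec (v s i)) ≤ 0 :=
      Finset.sum_nonpos fun i _ => hterm s i
    have hD : (A.mulVec (e s) + Wk.mulVec (v s k)) ⬝ᵥ P.mulVec (e s)
        + e s ⬝ᵥ P.mulVec (A.mulVec (e s) + Wk.mulVec (v s k))
        = e s ⬝ᵥ (Aᵀ * P + P * A).mulVec (e s)
          + 2 * (e s ⬝ᵥ P.mulVec (Wk.mulVec (v s k))) := by
      rw [add_dotProduct, Matrix.mulVec_add, dotProduct_add,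
        dot_symm P hPsymm (Wk.mulVec (v s k)) (e s), ← quad_eq]
      ring
    rw [hD]
    have h1 : c * (p₁ * (e s ⬝ᵥ e s)) ≤ c * V s :=
      mul_le_mul_of_nonneg_left (hVlo s) hc.le
    have heq : μ * (c ^ 2 * (e s ⬝ᵥ e s)) = c * (p₁ * (e s ⬝ᵥ e s)) := by
      rw [← hmc]; ring
    linarith
  -- Gronwall-type argument
  set g : ℝ → ℝ := fun s => V s * Real.exp (c * s) with hgdef
  have hdg : ∀ s, 0 ≤ s → HasDerivAt g
      (((A.mulVec (e s) + Wk.mulVec (v s k)) ⬝ᵥ P.mulVec (e s)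
        + e s ⬝ᵥ P.mulVec (A.mulVec (e s) + Wk.mulVec (v s k)) + c * V s)
        * Real.exp (c * s)) s := by
    intro s hs
    have hexp : HasDerivAt (fun s : ℝ => Real.exp (c * s)) (Real.exp (c * s) * c) s := by
      simpa using ((hasDerivAt_id s).const_mul c).exp
    have := (hdV s hs).mul hexp
    refine this.congr_deriv ?_
    ring
  have hmono : AntitoneOn g (Set.Ici (0 : ℝ)) := by
    apply antitoneOn_of_deriv_nonpos (convex_Ici 0)
    · intro s hs
      exact ((hdg s hs).continuousAt).continuousWithinAt
    · intro s hs
      rw [interior_Ici] at hs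
      exact ((hdg s hs.le).differentiableAt).differentiableWithinAt
    · intro s hs
      rw [interior_Ici] at hs
      rw [(hdg s hs.le).deriv]
      have hk2 := key s
      have hep := Real.exp_pos (c * s)
      nlinarith
  have hVt : ∀ t, 0 ≤ t → V t ≤ V 0 * Real.exp (-(c * t)) := by
    intro t ht
    have hg := hmono Set.self_mem_Ici ht ht
    have hg0 : g 0 = V 0 := by simp [hgdef]
    rw [hg0] at hg
    have hep := Real.exp_pos (c * t)
    have : V t = (V t * Real.exp (c * t)) * Real.exp (-(c * t)) := by
      rw [Real.exp_neg]; field_simp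
    rw [this]
    exact mul_le_mul_of_nonneg_right hg (Real.exp_pos _).le
  -- conclude
  intro t ht
  have hEt : e t ⬝ᵥ e t ≤ (p₂ / p₁) * Real.exp (-(c * t)) * (e 0 ⬝ᵥ e 0) := by
    have h1 := hVlo t
    have h2 := hVt t ht
    have h3 := hVhi 0
    have hep := Real.exp_pos (-(c * t))
    rw [div_mul_eq_mul_div, div_mul_eq_mul_div, le_div_iff₀ hp₁]
    nlinarith [mul_le_mul_of_nonneg_right h3 hep.le]
  have hsq : Real.sqrt (e t ⬝ᵥ e t)
      ≤ Real.sqrt ((p₂ / p₁) * Real.exp (-(c * t)) * (e 0 ⬝ᵥ e 0)) :=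
    Real.sqrt_le_sqrt hEt
  have hsplit : Real.sqrt ((p₂ / p₁) * Real.exp (-(c * t)) * (e 0 ⬝ᵥ e 0))
      = Real.sqrt (p₂ / p₁) * Real.exp (-(p₁ / (2 * μ)) * t) * Real.sqrt (e 0 ⬝ᵥ e 0) := by
    have hnn : (0 : ℝ) ≤ p₂ / p₁ := div_nonneg (le_trans hp₁.le hp₁₂) hp₁.le
    rw [Real.sqrt_mul (mul_nonneg hnn (Real.exp_pos _).le), Real.sqrt_mul hnn,
      ← Real.exp_half]
    have hxeq : -(c * t) / 2 = -(p₁ / (2 * μ)) * t := by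
      rw [hcdef]
      ring
    rw [hxeq]
  have e1 : eNorm (x₁ t - x₂ t) = Real.sqrt (e t ⬝ᵥ e t) := rfl
  have e2 : eNorm (x₁ 0 - x₂ 0) = Real.sqrt (e 0 ⬝ᵥ e 0) := rfl
  rw [e1, e2, ← hsplit]
  exact hsq
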